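/- Let S be a totally ordered semifield, M a commutative monoid, and A = S[M]. Let P ⊆ P' be prime congruences on A, both S-continuous. Then the sets of series converging at P and at P' coincide: a function f : M → S converges at P if and only if it converges at P'. -/
import Mathlib


/-- A totally ordered idempotent semifield, assumed different from the Boolean semifield `𝔹`. -/
class IdemTOSemifield (K : Type*) extends CommSemiring K, LinearOrder K where
  add_eq_max : ∀ a b : K, a + b = max a b
  exists_inv : ∀ a : K, a ≠ 0 → ∃ b : K, a * b = 1
  exists_nontrivial_unit : ∃ a : K, a ≠ 0 ∧ a ≠ 1

/-- The canonical topology on a totally ordered semifield. -/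
def canonicalTopology (K : Type*) [IdemTOSemifield K] : TopologicalSpace K :=
  TopologicalSpace.generateFrom
    {s : Set K | (∃ a : K, a ≠ 0 ∧ s = {a}) ∨ (∃ a : K, a ≠ 0 ∧ s = Set.Iic a)}

/-- A prime congruence on a commutative semiring: the congruence is proper and the quotient is
totally ordered with respect to the canonical order and cancellative. -/
structure IsPrimeCon {A : Type*} [CommSemiring A] (P : RingCon A) : Prop where
  proper : ¬ P 0 1
  totalOrd : ∀ a b : A, P (a + b) a ∨ P (a + b) b
  cancel : ∀ a b c : A, ¬ P a 0 → P (a * b) (a * c) → P b c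

/-- `x ≤_P y`: the image of `x` in `A/P` is at most that of `y` in the canonical order. -/
def leP {A : Type*} [CommSemiring A] (P : RingCon A) (x y : A) : Prop := P (x + y) y

/-- `x <_P y`: the image of `x` in `A/P` is strictly below that of `y`. -/
def ltP {A : Type*} [CommSemiring A] (P : RingCon A) (x y : A) : Prop := P (x + y) y ∧ ¬ P x y

/-- A prime congruence `P` on an `S`-algebra `A` (with structure map `ι`) is `S`-continuous:
for all `f, g` not in the ideal-kernel of `P` there is a nonzero `b ∈ S` with `ι b * g <_P f`. -/
def SCont {S A : Type*} [CommSemiring S] [CommSemiring A] (ι : S →+* A) (P : RingCon A) : Prop :=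
  ∀ f g : A, ¬ P f 0 → ¬ P g 0 → ∃ b : S, b ≠ 0 ∧ ltP P (ι b * g) f

/-- A series (a function `f : M → S`, thought of as `Σ_u f_u χ^u`) converges at a prime
congruence `P` on `S[M]` if for every `g ∈ S[M]` outside the ideal-kernel of `P` only finitely
many terms `f_u · χ^u` satisfy `g ≤_P f_u · χ^u`. -/
def SeriesConverges {S M : Type*} [IdemTOSemifield S] [AddCommMonoid M]
    (P : RingCon (AddMonoidAlgebra S M)) (f : M → S) : Prop :=
  ∀ g : AddMonoidAlgebra S M, ¬ P g 0 →
    {u : M | leP P g (AddMonoidAlgebra.single u (f u))}.Finite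

/-!
Statement 16: if `P ⊆ P'` are `S`-continuous prime congruences on `S[M]`, then a series converges
at `P` if and only if it converges at `P'`.
-/

lemma leP_trans {A : Type*} [CommSemiring A] (P : RingCon A) {x y z : A}
    (h1 : leP P x y) (h2 : leP P y z) : leP P x z := by
  have a1 : P (x + z) (x + (y + z)) := P.add (P.refl x) (P.symm h2)
  have a2 : P (x + (y + z)) (y + z) := by
    have h3 : P ((x + y) + z) (y + z) := P.add h1 (P.refl z)
    rwa [add_assoc] at h3
  exact P.trans (P.trans a1 a2) h2

lemma leP_antisymm {A : Type*} [CommSemiring A] (P : RingCon A) {x y : A}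
    (h1 : leP P x y) (h2 : leP P y x) : P x y := by
  have h3 : P x (y + x) := P.symm h2
  rw [add_comm] at h3
  exact P.trans h3 h1

lemma unit_not_ker {S M : Type*} [IdemTOSemifield S] [AddCommMonoid M]
    (P : RingCon (AddMonoidAlgebra S M)) (hP : IsPrimeCon P) {b : S} (hb : b ≠ 0) :
    ¬ P (AddMonoidAlgebra.singleZeroRingHom b) 0 := by
  intro h
  obtain ⟨c, hc⟩ := IdemTOSemifield.exists_inv b hb
  have h2 : P (AddMonoidAlgebra.singleZeroRingHom b * AddMonoidAlgebra.singleZeroRingHom c)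
      (0 * AddMonoidAlgebra.singleZeroRingHom c) := P.mul h (P.refl _)
  rw [← map_mul, hc, map_one, zero_mul] at h2
  exact hP.proper (P.symm h2)

theorem seriesConverges_iff_of_le {S M : Type*} [IdemTOSemifield S] [AddCommMonoid M]
    (P P' : RingCon (AddMonoidAlgebra S M))
    (hP : IsPrimeCon P) (hP' : IsPrimeCon P')
    (hPc : SCont (AddMonoidAlgebra.singleZeroRingHom) P)
    (hP'c : SCont (AddMonoidAlgebra.singleZeroRingHom) P')
    (hsub : ∀ f g : AddMonoidAlgebra S M, P f g → P' f g) :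
    ∀ f : M → S, SeriesConverges P f ↔ SeriesConverges P' f := by
  set ι := (AddMonoidAlgebra.singleZeroRingHom : S →+* AddMonoidAlgebra S M) with hι
  intro f
  constructor
  · -- P-convergence implies P'-convergence
    intro hconv g hg0
    have hgP : ¬ P g 0 := fun h => hg0 (hsub _ _ h)
    obtain ⟨b, hb, hlt⟩ := hP'c g g hg0 hg0
    have hbg0 : ¬ P (ι b * g) 0 := by
      intro h
      rw [← mul_zero (ι b)] at h
      exact hgP (hP.cancel (ι b) g 0 (unit_not_ker P hP hb) h)
    refine (hconv (ι b * g) hbg0).subset ?_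
    intro u hu
    rcases hP.totalOrd (ι b * g) (AddMonoidAlgebra.single u (f u)) with h | h
    · -- single u (f u) ≤_P ι b * g leads to a contradiction with hlt
      exfalso
      have h1 : leP P (AddMonoidAlgebra.single u (f u)) (ι b * g) := by
        rw [leP, add_comm]; exact h
      have h2 : leP P' (AddMonoidAlgebra.single u (f u)) (ι b * g) := hsub _ _ h1
      have h3 : leP P' g (ι b * g) := leP_trans P' hu h2
      exact hlt.2 (leP_antisymm P' hlt.1 h3)
    · exact h
  · -- P'-convergence implies P-convergence
    intro hconv g hg0
    have h10 : ¬ P (1 : AddMonoidAlgebra S M) 0 := fun h => hP.proper (P.symm h)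
    obtain ⟨b, hb, hlt⟩ := hPc g 1 hg0 h10
    rw [mul_one] at hlt
    refine (hconv (ι b) (unit_not_ker P' hP' hb)).subset ?_
    intro u hu
    exact hsub _ _ (leP_trans P hlt.1 hu)
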